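/- Let G be a group generated by a finite symmetric set S and let (F_n) be a Følner exhaustion of G. Then for every fixed k ∈ ℕ: |Ω_k(F_n)|/|F_n| → 1 and |B_k(F_n)|/|F_n| → 1 as n → ∞; consequently |Ω_k(F_n)|/|B_k(F_n)| → 1. -/

import Mathlib

open Pointwise Filter Topology

section Defs

variable {G : Type*} [Group G]

/-- The word ball of radius `k` with respect to the generating set `S`. -/
noncomputable def wball (S : Finset G) (k : ℕ) : Finset G :=
  letI := Classical.decEq G
  (insert (1 : G) S) ^ k

/-- The `k`-neighborhood `B_k(F) = B_k * F` of a finite set `F`. -/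
noncomputable def wnbhd (S : Finset G) (k : ℕ) (F : Finset G) : Finset G :=
  letI := Classical.decEq G
  wball S k * F

/-- The `k`-interior `Ω_k(F)` of a finite set `F`. -/
noncomputable def winter (S : Finset G) (k : ℕ) (F : Finset G) : Finset G :=
  letI := Classical.decEq G
  F.filter fun p => wball S k * {p} ⊆ F

/-- The boundary `∂F` of a finite set `F`. -/
noncomputable def wbdry (S : Finset G) (F : Finset G) : Finset G :=
  letI := Classical.decEq G
  F.filter fun p => ∃ s ∈ S, s * p ∉ F

/-- `S` is a finite symmetric generating set. -/
def IsSymmGen (S : Finset G) : Prop :=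
  (∀ s ∈ S, s⁻¹ ∈ S) ∧ Subgroup.closure (S : Set G) = ⊤

/-- A Følner exhaustion of `G`. -/
def IsFolnerExhaustion (S : Finset G) (F : ℕ → Finset G) : Prop :=
  (1 : G) ∈ F 0 ∧ Monotone F ∧ (∀ g : G, ∃ n, g ∈ F n) ∧
    Filter.Tendsto (fun n => ((wbdry S (F n)).card : ℝ) / ((F n).card : ℝ))
      Filter.atTop (nhds 0)

variable {d : ℕ}

/-- The space of vectors supported in `Fs` such that `A.mulVec f` vanishes on `Fv`. -/
noncomputable def kerOn (A : Matrix (Fin d) (Fin d) (MonoidAlgebra ℂ G))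
    (Fs Fv : Finset G) : Submodule ℂ (Fin d → MonoidAlgebra ℂ G) where
  carrier := {f | (∀ i, (f i).coeff.support ⊆ Fs) ∧ ∀ i, ∀ g ∈ Fv, (A.mulVec f i).coeff g = 0}
  zero_mem' := ⟨fun i => by simp, fun i g hg => by simp [Matrix.mulVec_zero]⟩
  add_mem' := by
    classical
    rintro f g ⟨hf1, hf2⟩ ⟨hg1, hg2⟩
    constructor
    · intro i
      exact Finsupp.support_add.trans (Finset.union_subset (hf1 i) (hg1 i))
    · intro i x hx
      have h : A.mulVec (f + g) = A.mulVec f + A.mulVec g := Matrix.mulVec_add A f g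
      rw [h]
      show ((A.mulVec f i).coeff + (A.mulVec g i).coeff) x = 0
      rw [Finsupp.add_apply, hf2 i x hx, hg2 i x hx, add_zero]
  smul_mem' := by
    classical
    rintro c f ⟨hf1, hf2⟩
    constructor
    · intro i
      exact (Finsupp.support_smul).trans (hf1 i)
    · intro i x hx
      have h : A.mulVec (c • f) = c • A.mulVec f := Matrix.mulVec_smul A c f
      rw [h]
      show (c • (A.mulVec f i).coeff) x = 0
      rw [Finsupp.smul_apply, hf2 i x hx, smul_zero]

/-- The space of vectors supported in `Fs` with `A.mulVec f = 0`. -/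
noncomputable def kerAll (A : Matrix (Fin d) (Fin d) (MonoidAlgebra ℂ G))
    (Fs : Finset G) : Submodule ℂ (Fin d → MonoidAlgebra ℂ G) where
  carrier := {f | (∀ i, (f i).coeff.support ⊆ Fs) ∧ A.mulVec f = 0}
  zero_mem' := ⟨fun i => by simp, Matrix.mulVec_zero A⟩
  add_mem' := by
    classical
    rintro f g ⟨hf1, hf2⟩ ⟨hg1, hg2⟩
    exact ⟨fun i => Finsupp.support_add.trans (Finset.union_subset (hf1 i) (hg1 i)),
      by rw [Matrix.mulVec_add, hf2, hg2, add_zero]⟩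
  smul_mem' := by
    classical
    rintro c f ⟨hf1, hf2⟩
    exact ⟨fun i => (Finsupp.support_smul).trans (hf1 i),
      by rw [Matrix.mulVec_smul, hf2, smul_zero]⟩

/-- `V(F)`. -/
noncomputable def VSpace (A : Matrix (Fin d) (Fin d) (MonoidAlgebra ℂ G)) (F : Finset G) :
    Submodule ℂ (Fin d → MonoidAlgebra ℂ G) :=
  kerOn A F F

/-- `Z(F)`. -/
noncomputable def ZSpace (S : Finset G) (w : ℕ) (A : Matrix (Fin d) (Fin d) (MonoidAlgebra ℂ G))
    (F : Finset G) : Submodule ℂ (Fin d → MonoidAlgebra ℂ G) :=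
  kerOn A (wnbhd S w F) F

/-- `W(F)`. -/
noncomputable def WSpace (S : Finset G) (w : ℕ) (A : Matrix (Fin d) (Fin d) (MonoidAlgebra ℂ G))
    (F : Finset G) : Submodule ℂ (Fin d → MonoidAlgebra ℂ G) :=
  kerAll A (winter S w F)

/-- `A.mulVec` as a `ℂ`-linear map. -/
noncomputable def mulVecL {R : Type*} [Ring R] [Algebra ℂ R] {d : ℕ}
    (A : Matrix (Fin d) (Fin d) R) : (Fin d → R) →ₗ[ℂ] (Fin d → R) where
  toFun := A.mulVec
  map_add' := Matrix.mulVec_add A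
  map_smul' c v := Matrix.mulVec_smul A c v

/-- Coordinatewise restriction to `F` (multiplication by the indicator of `F`). -/
noncomputable def restrictTo (d : ℕ) (F : Finset G) :
    (Fin d → MonoidAlgebra ℂ G) →ₗ[ℂ] (Fin d → MonoidAlgebra ℂ G) :=
  letI := Classical.decEq G
  { toFun := fun f i => MonoidAlgebra.ofCoeff ((f i).coeff.filter (· ∈ F))
    map_add' := fun f g => by
      funext i
      exact congrArg MonoidAlgebra.ofCoeff Finsupp.filter_add
    map_smul' := fun c f => by
      funext i
      exact congrArg MonoidAlgebra.ofCoeff Finsupp.filter_smul }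

end Defs

section Tiling

variable {ι α : Type*}

/-- An `ε`-disjoint family of finite sets. -/
def EpsDisjoint (I : Finset ι) (A : ι → Finset α) (ε : ℝ) : Prop :=
  ∃ Ab : ι → Finset α, (∀ i ∈ I, Ab i ⊆ A i) ∧
    (∀ i ∈ I, ((1 - ε) * (A i).card : ℝ) ≤ ((Ab i).card : ℝ)) ∧
    ∀ i ∈ I, ∀ j ∈ I, i ≠ j → Disjoint (Ab i) (Ab j)

/-- The family `(A i)_{i ∈ I}` `a`-covers `X`. -/
def CoversFrac (I : Finset ι) (A : ι → Finset α) (X : Finset α) (a : ℝ) : Prop :=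
  letI := Classical.decEq α
  (a * X.card : ℝ) ≤ ((X ∩ I.biUnion A).card : ℝ)

/-- The family `(A i)_{i ∈ I}` `δ`-evenly covers `X`. -/
def EvenCovering (I : Finset ι) (A : ι → Finset α) (X : Finset α) (δ : ℝ) : Prop :=
  letI := Classical.decEq α
  ∃ M : ℕ, 1 ≤ M ∧ (∀ p ∈ X, (I.filter fun i => p ∈ A i).card ≤ M) ∧
    ((1 - δ) * M * X.card : ℝ) ≤ ∑ i ∈ I, ((A i).card : ℝ)

/-- The right translate `H·x`. -/
noncomputable def rtrans [Mul α] (H : Finset α) (x : α) : Finset α :=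
  letI := Classical.decEq α
  H.image (· * x)

end Tiling

section Supp

variable {G : Type*} [Group G]

/-- Vectors all of whose coordinates are supported in `F`. -/
noncomputable def suppIn (d : ℕ) (F : Finset G) :
    Submodule ℂ (Fin d → MonoidAlgebra ℂ G) where
  carrier := {f | ∀ i, (f i).coeff.support ⊆ F}
  zero_mem' := fun i => by simp
  add_mem' := by
    classical
    intro f g hf hg i
    exact Finsupp.support_add.trans (Finset.union_subset (hf i) (hg i))
  smul_mem' := fun c f hf i => (Finsupp.support_smul).trans (hf i)

end Supp
section AuxProof

attribute [local instance] Classical.decEq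

variable {G : Type*} [Group G]

private lemma symm_inv_eq' {S : Finset G} (hS : ∀ s ∈ S, s⁻¹ ∈ S) : S⁻¹ = S := by
  classical
  apply Finset.eq_of_subset_of_card_le
  · intro x hx
    rw [Finset.mem_inv'] at hx
    simpa using hS _ hx
  · rw [Finset.card_inv]

private lemma base_inv_eq {S : Finset G} (hS : ∀ s ∈ S, s⁻¹ ∈ S) :
    (insert (1 : G) S)⁻¹ = insert (1 : G) S := by
  classical
  rw [Finset.inv_insert, inv_one, symm_inv_eq' hS]

private lemma wball_inv {S : Finset G} (hS : ∀ s ∈ S, s⁻¹ ∈ S) (k : ℕ) :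
    (wball S k)⁻¹ = wball S k := by
  classical
  show ((insert (1:G) S) ^ k)⁻¹ = (insert (1:G) S) ^ k
  rw [← inv_pow, base_inv_eq hS]

private lemma one_mem_wball (S : Finset G) (k : ℕ) : (1 : G) ∈ wball S k := by
  classical
  induction k with
  | zero => simp [wball]
  | succ n ih =>
    show (1 : G) ∈ (insert (1:G) S) ^ (n + 1)
    rw [pow_succ]
    have h := Finset.mul_mem_mul (a := (1:G)) (b := (1:G)) ih (Finset.mem_insert_self 1 S)
    rw [mul_one] at h; exact h

private lemma wball_subset_succ (S : Finset G) (k : ℕ) : wball S k ⊆ wball S (k + 1) := by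
  classical
  intro x hx
  show x ∈ (insert (1:G) S) ^ (k + 1)
  rw [pow_succ']
  have h := Finset.mul_mem_mul (Finset.mem_insert_self 1 S) hx
  rw [one_mul] at h; exact h

private lemma mem_wbdry {S F : Finset G} {p : G} :
    p ∈ wbdry S F ↔ p ∈ F ∧ ∃ s ∈ S, s * p ∉ F := by
  classical
  simp [wbdry]

/-- If `p ∈ F` has a `k`-ball translate escaping `F`, then `p ∈ B_k * ∂F`. -/
private lemma interior_aux {S : Finset G} (hS : ∀ s ∈ S, s⁻¹ ∈ S) (k : ℕ) :
    ∀ {F : Finset G} {b p : G}, b ∈ wball S k → p ∈ F → b * p ∉ F →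
      p ∈ wball S k * wbdry S F := by
  classical
  induction k with
  | zero =>
    intro F b p hb hp hbp
    have : b = 1 := by simpa [wball] using hb
    exact absurd (by simpa [this] using hp) hbp
  | succ n ih =>
    intro F b p hb hp hbp
    have hb' : b ∈ insert (1:G) S * (insert (1:G) S) ^ n := by
      have : b ∈ (insert (1:G) S) ^ (n + 1) := hb
      rwa [pow_succ'] at this
    obtain ⟨s, hs, c, hc, rfl⟩ := Finset.mem_mul.1 hb'
    by_cases hcp : c * p ∈ F
    · -- c * p is in F but s * (c*p) is not
      have hscp : s * (c * p) ∉ F := by rwa [← mul_assoc]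
      have hs1 : s ≠ 1 := by rintro rfl; exact hscp (by simpa using hcp)
      have hsS : s ∈ S := (Finset.mem_insert.1 hs).resolve_left hs1
      have hbd : c * p ∈ wbdry S F := mem_wbdry.2 ⟨hcp, s, hsS, hscp⟩
      have hcinv : c⁻¹ ∈ wball S n := by
        rw [← wball_inv hS n, Finset.mem_inv', inv_inv]; exact hc
      have : c⁻¹ * (c * p) ∈ wball S n * wbdry S F := Finset.mul_mem_mul hcinv hbd
      rw [inv_mul_cancel_left] at this
      exact Finset.mul_subset_mul_right (wball_subset_succ S n) this
    · have := ih (F := F) hc hp hcp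
      exact Finset.mul_subset_mul_right (wball_subset_succ S n) this

/-- If `p ∈ F` and `b * p ∉ F` for `b ∈ B_k`, then `b * p ∈ B_k * ∂F`. -/
private lemma nbhd_aux {S : Finset G} (k : ℕ) :
    ∀ {F : Finset G} {b p : G}, b ∈ wball S k → p ∈ F → b * p ∉ F →
      b * p ∈ wball S k * wbdry S F := by
  classical
  induction k with
  | zero =>
    intro F b p hb hp hbp
    have : b = 1 := by simpa [wball] using hb
    exact absurd (by simpa [this] using hp) hbp
  | succ n ih =>
    intro F b p hb hp hbp
    have hb' : b ∈ (insert (1:G) S) ^ n * insert (1:G) S := by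
      have : b ∈ (insert (1:G) S) ^ (n + 1) := hb
      rwa [pow_succ] at this
    obtain ⟨c, hc, s, hs, rfl⟩ := Finset.mem_mul.1 hb'
    by_cases hsp : s * p ∈ F
    · have h2 : c * (s * p) ∉ F := by rwa [← mul_assoc]
      have := ih (F := F) hc hsp h2
      rw [← mul_assoc] at this
      exact Finset.mul_subset_mul_right (wball_subset_succ S n) this
    · have hs1 : s ≠ 1 := by rintro rfl; exact hsp (by simpa using hp)
      have hsS : s ∈ S := (Finset.mem_insert.1 hs).resolve_left hs1
      have hbd : p ∈ wbdry S F := mem_wbdry.2 ⟨hp, s, hsS, hsp⟩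
      exact Finset.mul_mem_mul hb hbd

private lemma sdiff_interior_subset {S : Finset G} (hS : ∀ s ∈ S, s⁻¹ ∈ S) (k : ℕ)
    (F : Finset G) : F \ winter S k F ⊆ wball S k * wbdry S F := by
  classical
  intro p hp
  rw [Finset.mem_sdiff] at hp
  obtain ⟨hpF, hpI⟩ := hp
  have : ¬ (wball S k * {p} ⊆ F) := by
    intro h
    exact hpI (by simpa [winter, Finset.mem_filter, hpF] using h)
  obtain ⟨x, hx, hxF⟩ := Finset.not_subset.1 this
  obtain ⟨b, hb, q, hq, rfl⟩ := Finset.mem_mul.1 hx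
  rw [Finset.mem_singleton] at hq; subst hq
  exact interior_aux hS k hb hpF hxF

private lemma nbhd_sdiff_subset (S : Finset G) (k : ℕ) (F : Finset G) :
    wnbhd S k F \ F ⊆ wball S k * wbdry S F := by
  classical
  intro x hx
  rw [Finset.mem_sdiff] at hx
  obtain ⟨hx1, hx2⟩ := hx
  obtain ⟨b, hb, p, hp, rfl⟩ := Finset.mem_mul.1 hx1
  exact nbhd_aux k hb hp hx2

private lemma winter_subset (S : Finset G) (k : ℕ) (F : Finset G) :
    winter S k F ⊆ F := by
  classical
  exact Finset.filter_subset _ _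

private lemma subset_wnbhd (S : Finset G) (k : ℕ) (F : Finset G) :
    F ⊆ wnbhd S k F := by
  classical
  intro p hp
  have := Finset.mul_mem_mul (one_mem_wball S k) hp
  rw [one_mul] at this; exact this

end AuxProof

theorem folner_interior_neighborhood_ratio {G : Type*} [Group G] (S : Finset G)
    (hS : IsSymmGen S) (F : ℕ → Finset G) (hF : IsFolnerExhaustion S F) (k : ℕ) :
    Tendsto (fun n => ((winter S k (F n)).card : ℝ) / ((F n).card : ℝ)) atTop (𝓝 1) ∧
    Tendsto (fun n => ((wnbhd S k (F n)).card : ℝ) / ((F n).card : ℝ)) atTop (𝓝 1) ∧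
    Tendsto (fun n => ((winter S k (F n)).card : ℝ) / ((wnbhd S k (F n)).card : ℝ)) atTop (𝓝 1) := by
  classical
  obtain ⟨h1F, hmono, _, hbd⟩ := hF
  set C : ℝ := ((wball S k).card : ℝ) with hCdef
  have hpos : ∀ n, (0 : ℝ) < ((F n).card : ℝ) := fun n => by
    have h1 : (1 : G) ∈ F n := hmono (Nat.zero_le n) h1F
    exact_mod_cast Finset.card_pos.2 ⟨1, h1⟩
  have hΩle : ∀ n, (winter S k (F n)).card ≤ (F n).card :=
    fun n => Finset.card_le_card (winter_subset S k (F n))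
  have hNge : ∀ n, (F n).card ≤ (wnbhd S k (F n)).card :=
    fun n => Finset.card_le_card (subset_wnbhd S k (F n))
  have key1 : ∀ n, ((F n).card : ℝ) - ((winter S k (F n)).card : ℝ)
      ≤ C * ((wbdry S (F n)).card : ℝ) := by
    intro n
    have h1 : (F n \ winter S k (F n)).card ≤ (wball S k).card * (wbdry S (F n)).card :=
      (Finset.card_le_card (sdiff_interior_subset hS.1 k (F n))).trans Finset.card_mul_le
    have h2 : (F n \ winter S k (F n)).card = (F n).card - (winter S k (F n)).card :=
      Finset.card_sdiff_of_subset (winter_subset S k (F n))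
    have h3 : ((F n).card : ℝ) - ((winter S k (F n)).card : ℝ)
        = (((F n).card - (winter S k (F n)).card : ℕ) : ℝ) := by
      rw [Nat.cast_sub (hΩle n)]
    rw [h3, ← h2, hCdef]
    exact_mod_cast h1
  have key2 : ∀ n, ((wnbhd S k (F n)).card : ℝ) - ((F n).card : ℝ)
      ≤ C * ((wbdry S (F n)).card : ℝ) := by
    intro n
    have h1 : (wnbhd S k (F n) \ F n).card ≤ (wball S k).card * (wbdry S (F n)).card :=
      (Finset.card_le_card (nbhd_sdiff_subset S k (F n))).trans Finset.card_mul_le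
    have h2 : (wnbhd S k (F n) \ F n).card = (wnbhd S k (F n)).card - (F n).card :=
      Finset.card_sdiff_of_subset (subset_wnbhd S k (F n))
    have h3 : ((wnbhd S k (F n)).card : ℝ) - ((F n).card : ℝ)
        = (((wnbhd S k (F n)).card - (F n).card : ℕ) : ℝ) := by
      rw [Nat.cast_sub (hNge n)]
    rw [h3, ← h2, hCdef]
    exact_mod_cast h1
  have hlow : Tendsto (fun n => 1 - C * (((wbdry S (F n)).card : ℝ) / ((F n).card : ℝ)))
      atTop (𝓝 1) := by
    simpa using tendsto_const_nhds.sub (hbd.const_mul C)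
  have hup : Tendsto (fun n => 1 + C * (((wbdry S (F n)).card : ℝ) / ((F n).card : ℝ)))
      atTop (𝓝 1) := by
    simpa using tendsto_const_nhds.add (hbd.const_mul C)
  have hA : Tendsto (fun n => ((winter S k (F n)).card : ℝ) / ((F n).card : ℝ)) atTop (𝓝 1) := by
    refine tendsto_of_tendsto_of_tendsto_of_le_of_le hlow tendsto_const_nhds ?_ ?_
    · intro n
      have hf := hpos n
      rw [le_div_iff₀ hf]
      have hexp : (1 - C * (((wbdry S (F n)).card : ℝ) / ((F n).card : ℝ))) * ((F n).card : ℝ)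
          = ((F n).card : ℝ) - C * ((wbdry S (F n)).card : ℝ) := by
        field_simp
      rw [hexp]
      linarith [key1 n]
    · intro n
      exact (div_le_one (hpos n)).2 (by exact_mod_cast hΩle n)
  have hB : Tendsto (fun n => ((wnbhd S k (F n)).card : ℝ) / ((F n).card : ℝ)) atTop (𝓝 1) := by
    refine tendsto_of_tendsto_of_tendsto_of_le_of_le tendsto_const_nhds hup ?_ ?_
    · intro n
      exact (one_le_div (hpos n)).2 (by exact_mod_cast hNge n)
    · intro n
      have hf := hpos n
      rw [div_le_iff₀ hf]
      have hexp : (1 + C * (((wbdry S (F n)).card : ℝ) / ((F n).card : ℝ))) * ((F n).card : ℝ)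
          = ((F n).card : ℝ) + C * ((wbdry S (F n)).card : ℝ) := by
        field_simp
      rw [hexp]
      linarith [key2 n]
  refine ⟨hA, hB, ?_⟩
  have hNpos : ∀ n, (0 : ℝ) < ((wnbhd S k (F n)).card : ℝ) := fun n =>
    lt_of_lt_of_le (hpos n) (by exact_mod_cast hNge n)
  have heq : ∀ n, (((winter S k (F n)).card : ℝ) / ((F n).card : ℝ))
      / (((wnbhd S k (F n)).card : ℝ) / ((F n).card : ℝ))
      = ((winter S k (F n)).card : ℝ) / ((wnbhd S k (F n)).card : ℝ) := by
    intro n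
    rw [div_div_div_cancel_right₀ (ne_of_gt (hpos n))]
  have hd : Tendsto (fun n => (((winter S k (F n)).card : ℝ) / ((F n).card : ℝ))
      / (((wnbhd S k (F n)).card : ℝ) / ((F n).card : ℝ))) atTop (𝓝 1) := by
    have := hA.div hB one_ne_zero; rw [div_one] at this; exact this
  exact hd.congr heq
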